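/- arXiv:2406.01418 — 2 statements merged into one kernel-verified Lean document; each statement's English description precedes it below -/
import Mathlib

section
/- Let (K,x) be a tribe-vertex pair of a finite simple graph H in which x is adjacent to every vertex of K, and for 0 ≤ i ≤ |K| let H_i be the graph obtained from H by removing the edges joining x to exactly i of the vertices of K (say to v_1,…,v_i for a fixed ordering v_1,…,v_{|K|} of K). Then for any 0 ≤ i ≤ j ≤ k ≤ |K| one has (i−j)·X_{H_k} + (j−k)·X_{H_i} + (k−i)·X_{H_j} = 0. -/
noncomputable section
open scoped Classical

/-- The chromatic symmetric function of a simple graph `G`, as a formal power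
series over `ℚ` in countably many commuting variables indexed by the colors `ℕ`.
The coefficient of the monomial `∏ i, xᵢ ^ d i` is the number of proper
colorings `κ : V → ℕ` whose class of color `i` has exactly `d i` vertices. -/
def csf {V : Type} (G : SimpleGraph V) : MvPowerSeries ℕ ℚ :=
  fun d : ℕ →₀ ℕ =>
    (Nat.card {κ : V → ℕ // (∀ a b : V, G.Adj a b → κ a ≠ κ b) ∧
        ∀ i : ℕ, Nat.card {v : V // κ v = i} = d i} : ℚ)

/-- The elementary symmetric function `eₖ`, as a formal power series:
the sum of all squarefree monomials of degree `k`. -/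
def esymm (k : ℕ) : MvPowerSeries ℕ ℚ :=
  fun d : ℕ →₀ ℕ => if (∀ i, d i ≤ 1) ∧ d.support.card = k then 1 else 0

/-- `e_I = e_{i₁} ⋯ e_{i_l}` for a composition recorded as a list. -/
def eList (I : List ℕ) : MvPowerSeries ℕ ℚ := (I.map esymm).prod

/-- The disjoint union of two simple graphs. -/
def disjSum {α β : Type} (G : SimpleGraph α) (H : SimpleGraph β) :
    SimpleGraph (α ⊕ β) where
  Adj x y := (∃ a b, G.Adj a b ∧ x = Sum.inl a ∧ y = Sum.inl b) ∨
             (∃ a b, H.Adj a b ∧ x = Sum.inr a ∧ y = Sum.inr b)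
  symm := by
    refine ⟨?_⟩
    rintro x y (⟨a, b, h, rfl, rfl⟩ | ⟨a, b, h, rfl, rfl⟩)
    · exact Or.inl ⟨b, a, h.symm, rfl, rfl⟩
    · exact Or.inr ⟨b, a, h.symm, rfl, rfl⟩
  loopless := by
    refine ⟨?_⟩
    rintro x (⟨a, b, h, rfl, hy⟩ | ⟨a, b, h, rfl, hy⟩) <;>
      · cases hy
        exact h.ne rfl

/-- The quotient of a simple graph obtained by identifying vertices along the
equivalence relation generated by `r`; identified vertices are joined by an
edge in the quotient iff some pair of their representatives were adjacent. -/
def glue {α : Type} (G : SimpleGraph α) (r : α → α → Prop) :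
    SimpleGraph (Quotient (Relation.EqvGen.setoid r)) where
  Adj x y := x ≠ y ∧ ∃ a b, G.Adj a b ∧ Quotient.mk _ a = x ∧ Quotient.mk _ b = y
  symm := by
    refine ⟨?_⟩
    rintro x y ⟨hne, a, b, hab, rfl, rfl⟩
    exact ⟨hne.symm, b, a, hab.symm, rfl, rfl⟩
  loopless := ⟨fun x h => h.1 rfl⟩

/-- A rooted finite simple graph. -/
structure PtGraph : Type 1 where
  V : Type
  fin : Finite V
  graph : SimpleGraph V
  root : V

attribute [instance] PtGraph.fin

/-- The chromatic symmetric function of a rooted graph. -/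
def PtGraph.csf (G : PtGraph) : MvPowerSeries ℕ ℚ := _root_.csf G.graph

/-- The rooted one-vertex graph `K₁`. -/
def PtGraph.K1 : PtGraph := ⟨PUnit, inferInstance, ⊥, PUnit.unit⟩

/-- The identifications performed when conjoining two rooted graphs by a path
of length `k`: the first end of a path with `k+1` vertices is glued to the
root of `G` and the last end to the root of `H`. -/
def pcRel (k : ℕ) (G H : PtGraph) :
    (G.V ⊕ (Fin (k + 1) ⊕ H.V)) → (G.V ⊕ (Fin (k + 1) ⊕ H.V)) → Prop :=
  fun x y =>
    (x = Sum.inl G.root ∧ y = Sum.inr (Sum.inl 0)) ∨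
    (x = Sum.inr (Sum.inl (Fin.last k)) ∧ y = Sum.inr (Sum.inr H.root))

/-- The path-conjoined graph `P^k(G,H)` of two rooted graphs `(G,u)`, `(H,v)`:
take the disjoint union of `G`, a path with `k+1` vertices and `H`, and glue the
two ends of the path to `u` and to `v` respectively. (For `k = 0` the two roots
get identified.)  The resulting graph is rooted at (the image of) `v`. -/
def pathConjoin (k : ℕ) (G H : PtGraph) : PtGraph where
  V := Quotient (Relation.EqvGen.setoid (pcRel k G H))
  fin := inferInstance
  graph := glue (disjSum G.graph (disjSum (SimpleGraph.pathGraph (k + 1)) H.graph))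
      (pcRel k G H)
  root := Quotient.mk _ (Sum.inr (Sum.inr H.root))

/-- The tailed graph `G^k = P^k(G, K₁)`. -/
def PtGraph.tail (G : PtGraph) (k : ℕ) : PtGraph := pathConjoin k G PtGraph.K1

/-- The same graph with a new root. -/
def PtGraph.reroot (G : PtGraph) (w : G.V) : PtGraph := ⟨G.V, G.fin, G.graph, w⟩

/-- The spider-conjoined graph `S^τ(G₁, …, G_l)`: each rooted graph `Gᵢ` is
joined to a common center vertex by a path of length `τᵢ`.  The legs are
recorded as a list of pairs `(τᵢ, Gᵢ)`; the result is rooted at the center. -/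
def spiderConjoin (legs : List (ℕ × PtGraph)) : PtGraph :=
  legs.foldr (fun p C => pathConjoin p.1 p.2 C) PtGraph.K1

/-- The 2-chain-conjoined graph `C^{gh}(G, M, H)` where the middle graph `M`
has the two (distinct) roots `x` and `y`: a path of length `g` joins the root
of `G` to `x`, and a path of length `h` joins `y` to the root of `H`. -/
def chain2 (g h : ℕ) (G : PtGraph) {μ : Type} (finμ : Finite μ)
    (M : SimpleGraph μ) (x y : μ) (H : PtGraph) : PtGraph :=
  pathConjoin h ((pathConjoin g G ⟨μ, finμ, M, x⟩).reroot
    (Quotient.mk _ (Sum.inr (Sum.inr y)))) H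

/-- The complete graph `K_m` as a rooted graph (on the vertex set
`Option (Fin (m-1))`, which has `m` elements for `m ≥ 1`), rooted at `none`. -/
def ptClique (m : ℕ) : PtGraph := ⟨Option (Fin (m - 1)), inferInstance, ⊤, none⟩

/-- The cycle `Cₙ` on `Fin n`: `i` is adjacent to `i ± 1 (mod n)`.
For `n = 2` this is the complete graph `K₂`. -/
def cycAdj (n : ℕ) : SimpleGraph (Fin n) :=
  SimpleGraph.fromRel fun i j => ((i : ℕ) + 1) % n = (j : ℕ)

/-- The cycle `C_m` as a rooted graph (the vertex type `Fin (m - 1 + 1)` is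
`Fin m` for `m ≥ 1` and is always nonempty), rooted at `0`. -/
def ptCycle (m : ℕ) : PtGraph :=
  ⟨Fin (m - 1 + 1), inferInstance, cycAdj (m - 1 + 1), 0⟩

/-- The finite set of all compositions of `n`, recorded as lists of
positive integers summing to `n`. -/
def compositions : ℕ → Finset (List ℕ)
  | 0 => {([] : List ℕ)}
  | n + 1 =>
      (Finset.range (n + 1)).attach.biUnion fun k =>
        (compositions k.1).image fun I => (n + 1 - k.1) :: I
  decreasing_by exact Finset.mem_range.mp k.2

/-- `w_I = i₁ (i₂ - 1) (i₃ - 1) ⋯ (i_l - 1)`, with `w` of the empty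
composition equal to `1`. -/
def wcomp : List ℕ → ℚ
  | [] => 1
  | a :: t => (a : ℚ) * (t.map fun i => (i : ℚ) - 1).prod

/-- `σ_I(a) = min { i₁ + ⋯ + i_k : 0 ≤ k ≤ ℓ(I), i₁ + ⋯ + i_k ≥ a }`. -/
def sigmaComp (I : List ℕ) (a : ℕ) : ℕ :=
  ((((List.range (I.length + 1)).map fun k => (I.take k).sum).filter
    fun s => a ≤ s).foldr min I.sum)

/-- The `a`-surplus `Θ_I(a) = σ_I(a) - a` of a composition. -/
def thetaComp (I : List ℕ) (a : ℕ) : ℕ := sigmaComp I a - a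

/-- the arithmetic-progression property for removing edges from a
tribe-vertex pair `(K, x)` of `H` in which `x` is adjacent to every vertex of
the clique `K` (enumerated as `vtx 0, …, vtx (m-1)`): `Hdel i` removes from `H`
the edges joining `x` to the first `i` vertices of `K`, and for all
`0 ≤ i ≤ j ≤ k ≤ |K|` we have
`(i-j)·X_{H_k} + (j-k)·X_{H_i} + (k-i)·X_{H_j} = 0`. -/
theorem statement1 {V : Type} [Fintype V] (H : SimpleGraph V)
    (m : ℕ) (vtx : Fin m → V) (hinj : Function.Injective vtx)
    (x : V) (hx : ∀ a, vtx a ≠ x)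
    (hclique : ∀ a b : Fin m, a ≠ b → H.Adj (vtx a) (vtx b))
    (hnbhd : ∀ (a b : Fin m) (z : V), z ≠ x →
      ((z = vtx a ∨ H.Adj (vtx a) z) ↔ (z = vtx b ∨ H.Adj (vtx b) z)))
    (hadj : ∀ a : Fin m, H.Adj x (vtx a))
    (Hdel : ℕ → SimpleGraph V)
    (hHdel : ∀ i, Hdel i =
      H.deleteEdges {e : Sym2 V | ∃ a : Fin m, (a : ℕ) < i ∧ e = s(x, vtx a)})
    (i j k : ℕ) (hij : i ≤ j) (hjk : j ≤ k) (hkm : k ≤ m) :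
    ((i : ℚ) - (j : ℚ)) • csf (Hdel k) + ((j : ℚ) - (k : ℚ)) • csf (Hdel i) +
      ((k : ℚ) - (i : ℚ)) • csf (Hdel j) = 0 := by
  classical
  have adjIff : ∀ (n : ℕ) (u w : V), (Hdel n).Adj u w ↔
      H.Adj u w ∧ ¬ ∃ c : Fin m, (c : ℕ) < n ∧ s(u, w) = s(x, vtx c) := by
    intro n u w
    rw [hHdel n, SimpleGraph.deleteEdges_adj]
    rfl
  have Pmono : ∀ (n n' : ℕ), n ≤ n' → ∀ κ : V → ℕ,
      (∀ a b : V, (Hdel n).Adj a b → κ a ≠ κ b) →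
      (∀ a b : V, (Hdel n').Adj a b → κ a ≠ κ b) := by
    intro n n' hnn κ hκ a b hab
    rw [adjIff] at hab
    exact hκ a b ((adjIff n a b).2 ⟨hab.1, fun ⟨c, hc, he⟩ => hab.2 ⟨c, hc.trans_le hnn, he⟩⟩)
  have cliqueAdj : ∀ (n : ℕ) (a b : Fin m), a ≠ b → (Hdel n).Adj (vtx a) (vtx b) := by
    intro n a b hab
    refine (adjIff n _ _).2 ⟨hclique a b hab, ?_⟩
    rintro ⟨c, -, he⟩
    rw [Sym2.eq_iff] at he
    rcases he with ⟨h1, -⟩ | ⟨-, h2⟩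
    · exact hx a h1
    · exact hx b h2
  have xAdj : ∀ (n : ℕ) (a : Fin m), n ≤ (a : ℕ) → (Hdel n).Adj x (vtx a) := by
    intro n a ha
    refine (adjIff n _ _).2 ⟨hadj a, ?_⟩
    rintro ⟨c, hc, he⟩
    rw [Sym2.eq_iff] at he
    rcases he with ⟨-, h2⟩ | ⟨-, h2⟩
    · have : a = c := hinj h2
      omega
    · exact hx a h2
  rcases Nat.eq_zero_or_pos m with hm | hm
  · subst hm
    have hi : i = 0 := by omega
    have hj : j = 0 := by omega
    have hk : k = 0 := by omega
    subst hi; subst hj; subst hk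
    norm_num
  -- main case
  funext d
  show ((i : ℚ) - j) * csf (Hdel k) d + ((j : ℚ) - k) * csf (Hdel i) d +
      ((k : ℚ) - i) * csf (Hdel j) d = 0
  set Q : (V → ℕ) → Prop := fun κ => ∀ c : ℕ, Nat.card {v : V // κ v = c} = d c with hQdef
  set P : ℕ → (V → ℕ) → Prop := fun n κ => ∀ a b : V, (Hdel n).Adj a b → κ a ≠ κ b with hPdef
  set T : ℕ → Set (V → ℕ) := fun n => {κ | P n κ ∧ Q κ} with hTdef
  set S : Fin m → Set (V → ℕ) := fun a => {κ | P m κ ∧ Q κ ∧ κ x = κ (vtx a)} with hSdef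
  -- finiteness
  have finQ : {κ : V → ℕ | Q κ}.Finite := by
    have hsub : {κ : V → ℕ | Q κ} ⊆ Set.pi Set.univ (fun _ : V => (↑d.support : Set ℕ)) := by
      intro κ hκ v _
      have h1 : Nat.card {u : V // κ u = κ v} = d (κ v) := hκ (κ v)
      have h2 : 0 < Nat.card {u : V // κ u = κ v} := by
        have : Nonempty {u : V // κ u = κ v} := ⟨⟨v, rfl⟩⟩
        exact Nat.card_pos
      simp only [Finset.coe_sort_coe, Finset.mem_coe, Finsupp.mem_support_iff]
      omega
    exact (Set.Finite.pi fun _ => d.support.finite_toSet).subset hsub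
  have finT : ∀ n, (T n).Finite := fun n => finQ.subset fun κ h => h.2
  have finS : ∀ a, (S a).Finite := fun a => finQ.subset fun κ h => h.2.1
  -- the swap bijections
  have H1 : ∀ (a b : Fin m) (z : V), z ≠ vtx a → z ≠ vtx b →
      (Hdel m).Adj (vtx a) z → (Hdel m).Adj (vtx b) z := by
    intro a b z hza hzb hadjz
    rw [adjIff] at hadjz
    have hzx : z ≠ x := by
      rintro rfl
      exact hadjz.2 ⟨a, a.isLt, Sym2.eq_swap⟩
    refine (adjIff m _ _).2 ⟨?_, ?_⟩
    · have := (hnbhd a b z hzx).1 (Or.inr hadjz.1)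
      rcases this with h | h
      · exact absurd h hzb
      · exact h
    · rintro ⟨c, -, he⟩
      rw [Sym2.eq_iff] at he
      rcases he with ⟨h1, -⟩ | ⟨-, h2⟩
      · exact hx b h1
      · exact hzx h2
  have adjSwap : ∀ (a b : Fin m) (u w : V), (Hdel m).Adj u w →
      (Hdel m).Adj (Equiv.swap (vtx a) (vtx b) u) (Equiv.swap (vtx a) (vtx b) w) := by
    intro a b u w h
    rcases eq_or_ne u (vtx a) with rfl | hua
    · rcases eq_or_ne w (vtx a) with rfl | hwa
      · exact absurd rfl h.ne
      · rcases eq_or_ne w (vtx b) with rfl | hwb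
        · rw [Equiv.swap_apply_left, Equiv.swap_apply_right]
          exact h.symm
        · rw [Equiv.swap_apply_left, Equiv.swap_apply_of_ne_of_ne hwa hwb]
          exact H1 a b w hwa hwb h
    · rcases eq_or_ne u (vtx b) with rfl | hub
      · rcases eq_or_ne w (vtx b) with rfl | hwb
        · exact absurd rfl h.ne
        · rcases eq_or_ne w (vtx a) with rfl | hwa
          · rw [Equiv.swap_apply_left, Equiv.swap_apply_right]
            exact h.symm
          · rw [Equiv.swap_apply_right, Equiv.swap_apply_of_ne_of_ne hwa hwb]
            exact H1 b a w hwb hwa h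
      · rw [Equiv.swap_apply_of_ne_of_ne hua hub]
        rcases eq_or_ne w (vtx a) with rfl | hwa
        · rw [Equiv.swap_apply_left]
          exact (H1 a b u hua hub h.symm).symm
        · rcases eq_or_ne w (vtx b) with rfl | hwb
          · rw [Equiv.swap_apply_right]
            exact (H1 b a u hub hua h.symm).symm
          · rw [Equiv.swap_apply_of_ne_of_ne hwa hwb]
            exact h
  have swapmem : ∀ (a b : Fin m) (κ : V → ℕ), κ ∈ S a →
      (κ ∘ Equiv.swap (vtx a) (vtx b)) ∈ S b := by
    intro a b κ hκ
    obtain ⟨hP, hQ, hxa⟩ := hκ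
    refine ⟨?_, ?_, ?_⟩
    · intro u w huw
      exact hP _ _ (adjSwap a b u w huw)
    · intro c
      have : Nat.card {v : V // (κ ∘ Equiv.swap (vtx a) (vtx b)) v = c}
          = Nat.card {v : V // κ v = c} := by
        apply Nat.card_congr
        exact Equiv.subtypeEquiv (Equiv.swap (vtx a) (vtx b)) fun v => Iff.rfl
      rw [this]
      exact hQ c
    · have hxx : Equiv.swap (vtx a) (vtx b) x = x :=
        Equiv.swap_apply_of_ne_of_ne (fun h => hx a h.symm) (fun h => hx b h.symm)
      have hbb : Equiv.swap (vtx a) (vtx b) (vtx b) = vtx a := Equiv.swap_apply_right _ _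
      show κ (Equiv.swap (vtx a) (vtx b) x) = κ (Equiv.swap (vtx a) (vtx b) (vtx b))
      rw [hxx, hbb]
      exact hxa
  have hScard : ∀ a b : Fin m, (S a).ncard = (S b).ncard := by
    intro a b
    rw [← Nat.card_coe_set_eq, ← Nat.card_coe_set_eq]
    apply Nat.card_congr
    refine ⟨fun κ => ⟨κ.1 ∘ Equiv.swap (vtx a) (vtx b), swapmem a b κ.1 κ.2⟩,
        fun κ => ⟨κ.1 ∘ Equiv.swap (vtx b) (vtx a), swapmem b a κ.1 κ.2⟩, ?_, ?_⟩ <;>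
      · rintro ⟨κ, hκ⟩
        ext v
        simp [Equiv.swap_comm]
  -- the decomposition step
  have Tsucc : ∀ n : ℕ, (hn : n < m) → T (n + 1) = T n ∪ S ⟨n, hn⟩ := by
    intro n hn
    apply Set.eq_of_subset_of_subset
    · rintro κ ⟨hP1, hQ1⟩
      by_cases hcase : κ x = κ (vtx ⟨n, hn⟩)
      · exact Or.inr ⟨Pmono (n + 1) m hn κ hP1, hQ1, hcase⟩
      · refine Or.inl ⟨?_, hQ1⟩
        intro u w huw
        rw [adjIff] at huw
        by_cases hdel : ∃ c : Fin m, (c : ℕ) < n + 1 ∧ s(u, w) = s(x, vtx c)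
        · obtain ⟨c, hc1, hc2⟩ := hdel
          have hcn : (c : ℕ) = n := by
            by_contra hne
            exact huw.2 ⟨c, by omega, hc2⟩
          have hceq : c = ⟨n, hn⟩ := Fin.ext hcn
          subst hceq
          rw [Sym2.eq_iff] at hc2
          rcases hc2 with ⟨rfl, rfl⟩ | ⟨rfl, rfl⟩
          · exact hcase
          · exact fun h => hcase h.symm
        · exact hP1 u w ((adjIff (n + 1) u w).2 ⟨huw.1, hdel⟩)
    · rintro κ (⟨hP1, hQ1⟩ | ⟨hP1, hQ1, hxe⟩)
      · exact ⟨Pmono n (n + 1) (by omega) κ hP1, hQ1⟩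
      · refine ⟨?_, hQ1⟩
        intro u w huw
        rw [adjIff] at huw
        by_cases hdel : ∃ c : Fin m, (c : ℕ) < m ∧ s(u, w) = s(x, vtx c)
        · obtain ⟨c, hc1, hc2⟩ := hdel
          have hcn : c ≠ ⟨n, hn⟩ := by
            intro h
            subst h
            exact huw.2 ⟨⟨n, hn⟩, Nat.lt_succ_self n, hc2⟩
          have hkey : κ x ≠ κ (vtx c) := by
            rw [hxe]
            exact hP1 _ _ (cliqueAdj m ⟨n, hn⟩ c (Ne.symm hcn))
          rw [Sym2.eq_iff] at hc2
          rcases hc2 with ⟨rfl, rfl⟩ | ⟨rfl, rfl⟩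
          · exact hkey
          · exact fun h => hkey h.symm
        · exact hP1 u w ((adjIff m u w).2 ⟨huw.1, hdel⟩)
  have Tdisj : ∀ n : ℕ, (hn : n < m) → Disjoint (T n) (S ⟨n, hn⟩) := by
    intro n hn
    rw [Set.disjoint_left]
    rintro κ ⟨hP1, -⟩ ⟨-, -, hxe⟩
    exact hP1 x (vtx ⟨n, hn⟩) (xAdj n ⟨n, hn⟩ le_rfl) hxe
  set a0 : Fin m := ⟨0, hm⟩ with ha0
  set B : ℚ := ((S a0).ncard : ℚ) with hB
  have main : ∀ n : ℕ, n ≤ m → ((T n).ncard : ℚ) = ((T 0).ncard : ℚ) + n * B := by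
    intro n
    induction n with
    | zero => intro _; simp
    | succ n ih =>
      intro hn1
      have hn : n < m := hn1
      rw [Tsucc n hn, Set.ncard_union_eq (Tdisj n hn) (finT n) (finS _)]
      push_cast
      rw [ih (by omega), hScard ⟨n, hn⟩ a0]
      ring
  have coeffEq : ∀ n : ℕ, n ≤ m → csf (Hdel n) d = ((T 0).ncard : ℚ) + n * B := by
    intro n hn
    have : csf (Hdel n) d = ((T n).ncard : ℚ) := by
      show ((Nat.card {κ : V → ℕ // P n κ ∧ Q κ} : ℚ)) = _
      rw [← Nat.card_coe_set_eq]
      rfl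
    rw [this, main n hn]
  rw [coeffEq i (by omega), coeffEq j (by omega), coeffEq k (by omega)]
  ring



end
end

section
/- Let n ≥ 1 and 0 ≤ a ≤ n be integers. Then Σ_{l=0}^{a} (1−l) · e_l · X_{P_{n−l}} equals X_{K_{a+1}^{n−1−a}} / a! if a ≤ n−1, and equals e_n if a = n. -/
noncomputable section
open scoped Classical

/-- indicator finsupp of a finset -/
def indF (S : Finset ℕ) : ℕ →₀ ℕ := ∑ i ∈ S, Finsupp.single i 1

lemma indF_apply (S : Finset ℕ) (j : ℕ) : indF S j = if j ∈ S then 1 else 0 := by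
  classical
  simp only [indF, Finsupp.finset_sum_apply, Finsupp.single_apply]
  rw [Finset.sum_ite_eq' S j (fun _ => 1)]

lemma indF_le {S : Finset ℕ} {d : ℕ →₀ ℕ} (h : S ⊆ d.support) : indF S ≤ d := by
  intro j
  rw [indF_apply]
  split_ifs with hj
  · exact Nat.one_le_iff_ne_zero.2 (Finsupp.mem_support_iff.1 (h hj))
  · exact Nat.zero_le _

lemma card_subtype_eq_sum {n : ℕ} (p : Fin n → Prop) :
    Nat.card {v : Fin n // p v} = ∑ v : Fin n, if p v then 1 else 0 := by
  classical
  rw [Nat.card_eq_fintype_card, Fintype.card_subtype, Finset.card_filter]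

lemma classCard_succ {m : ℕ} (κ : Fin (m + 1) → ℕ) (j : ℕ) :
    Nat.card {v : Fin (m + 1) // κ v = j} =
      (if κ 0 = j then 1 else 0) + Nat.card {v : Fin m // κ v.succ = j} := by
  rw [card_subtype_eq_sum, card_subtype_eq_sum, Fin.sum_univ_succ]
  congr 1
  split_ifs <;> rfl

lemma card_partition {α β : Type*} (P : α → Prop) [Finite {x : α // P x}] (c : α → β)
    (s : Finset β) (h : ∀ x, P x → c x ∈ s) :
    Nat.card {x // P x} = ∑ b ∈ s, Nat.card {x // c x = b ∧ P x} := by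
  classical
  set c' : {x // P x} → s := fun x => ⟨c x.1, h x.1 x.2⟩ with hc'
  have e : {x // P x} ≃ Σ b : s, {y : {x // P x} // c' y = b} :=
    (Equiv.sigmaFiberEquiv c').symm
  haveI : ∀ b : s, Fintype {y : {x // P x} // c' y = b} := fun b => Fintype.ofFinite _
  rw [Nat.card_congr e, Nat.card_eq_fintype_card, Fintype.card_sigma]
  have key : ∀ b : s, Fintype.card {y : {x // P x} // c' y = b} =
      Nat.card {x // c x = (b : β) ∧ P x} := by
    intro b
    rw [← Nat.card_eq_fintype_card]
    apply Nat.card_congr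
    refine ⟨fun y => ⟨y.1.1, by
        have := congrArg Subtype.val y.2
        exact ⟨this, y.1.2⟩⟩,
      fun x => ⟨⟨x.1, x.2.2⟩, Subtype.ext x.2.1⟩, fun y => rfl, fun x => rfl⟩
  simp only [key]
  exact Finset.sum_coe_sort s (fun b => Nat.card {x // c x = b ∧ P x})

lemma profile_mem_support {V : Type*} (κ : V → ℕ) (d : ℕ →₀ ℕ)
    (h : ∀ j, Nat.card {v : V // κ v = j} = d j) [Finite V] (v : V) : κ v ∈ d.support := by
  rw [Finsupp.mem_support_iff, ← h (κ v)]
  haveI : Nonempty {w : V // κ w = κ v} := ⟨⟨v, rfl⟩⟩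
  exact Nat.card_pos.ne'

lemma colorings_finite {V : Type*} [Finite V] (P : (V → ℕ) → Prop) (d : ℕ →₀ ℕ) :
    Finite {κ : V → ℕ // P κ ∧ ∀ j, Nat.card {v : V // κ v = j} = d j} := by
  classical
  haveI : Finite ({j // j ∈ d.support} ⊕ Unit) := inferInstance
  apply Finite.of_injective
    (fun κ : {κ : V → ℕ // P κ ∧ ∀ j, Nat.card {v : V // κ v = j} = d j} =>
      (fun v : V => (⟨κ.1 v, profile_mem_support κ.1 d κ.2.2 v⟩ : {j // j ∈ d.support})))
  intro x y hxy
  apply Subtype.ext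
  funext v
  exact congrArg Subtype.val (congrFun hxy v)

def Qc (m : ℕ) (d : ℕ →₀ ℕ) (i : ℕ) : ℕ :=
  Nat.card {κ : Fin (m + 1) → ℕ //
    (κ 0 = i ∧ ∀ v : Fin m, κ v.castSucc ≠ κ v.succ) ∧
      ∀ j, Nat.card {v : Fin (m + 1) // κ v = j} = d j}

lemma Qc_finite (m : ℕ) (d : ℕ →₀ ℕ) (i : ℕ) :
    Finite {κ : Fin (m + 1) → ℕ //
      (κ 0 = i ∧ ∀ v : Fin m, κ v.castSucc ≠ κ v.succ) ∧
        ∀ j, Nat.card {v : Fin (m + 1) // κ v = j} = d j} :=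
  colorings_finite _ d

lemma Qc_eq_zero {m : ℕ} {d : ℕ →₀ ℕ} {i : ℕ} (h : i ∉ d.support) : Qc m d i = 0 := by
  rw [Finsupp.notMem_support_iff] at h
  have : IsEmpty {κ : Fin (m + 1) → ℕ //
      (κ 0 = i ∧ ∀ v : Fin m, κ v.castSucc ≠ κ v.succ) ∧
        ∀ j, Nat.card {v : Fin (m + 1) // κ v = j} = d j} := by
    refine ⟨fun κ => ?_⟩
    have h1 := κ.2.2 i
    haveI : Nonempty {v : Fin (m + 1) // κ.1 v = i} := ⟨⟨0, κ.2.1.1⟩⟩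
    exact Nat.card_pos.ne' (h1.trans h)
  rw [Qc]
  exact Nat.card_of_isEmpty

lemma Qc_zero (d : ℕ →₀ ℕ) (i : ℕ) :
    Qc 0 d i = if d = Finsupp.single i 1 then 1 else 0 := by
  have hclass : ∀ (κ : Fin 1 → ℕ) (j : ℕ), κ 0 = i →
      Nat.card {v : Fin 1 // κ v = j} = (Finsupp.single i 1) j := by
    intro κ j h0
    rw [card_subtype_eq_sum, Fin.sum_univ_one, h0, Finsupp.single_apply]
    split_ifs <;> rfl
  split_ifs with hd
  · rw [Qc, Nat.card_eq_one_iff_unique]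
    constructor
    · refine ⟨fun κ κ' => ?_⟩
      apply Subtype.ext; funext v
      have hv : v = 0 := Fin.fin_one_eq_zero v
      rw [hv, κ.2.1.1, κ'.2.1.1]
    · refine ⟨fun _ => i, ⟨rfl, fun v => v.elim0⟩, fun j => ?_⟩
      rw [hclass _ j rfl, hd]
  · have : IsEmpty {κ : Fin 1 → ℕ //
        (κ 0 = i ∧ ∀ v : Fin 0, κ v.castSucc ≠ κ v.succ) ∧
          ∀ j, Nat.card {v : Fin 1 // κ v = j} = d j} := by
      refine ⟨fun κ => hd ?_⟩
      ext j
      rw [← κ.2.2 j, hclass _ j κ.2.1.1]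
    rw [Qc]
    exact Nat.card_of_isEmpty

lemma sub_single_apply_ne (d : ℕ →₀ ℕ) (i j : ℕ) (h : j ≠ i) :
    (d - Finsupp.single i 1 : ℕ →₀ ℕ) j = d j := by
  rw [Finsupp.tsub_apply, Finsupp.single_apply, if_neg (fun hh => h hh.symm), Nat.sub_zero]

lemma sub_single_apply_self (d : ℕ →₀ ℕ) (i : ℕ) :
    (d - Finsupp.single i 1 : ℕ →₀ ℕ) i = d i - 1 := by
  rw [Finsupp.tsub_apply, Finsupp.single_apply, if_pos rfl]

lemma Qc_succ (m : ℕ) (d : ℕ →₀ ℕ) (i : ℕ) (hi : i ∈ d.support) (u : Finset ℕ)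
    (hu : (d - Finsupp.single i 1 : ℕ →₀ ℕ).support ⊆ u) :
    Qc (m + 1) d i = ∑ j ∈ u.erase i, Qc m (d - Finsupp.single i 1) j := by
  classical
  have hdi : 1 ≤ d i := Nat.one_le_iff_ne_zero.2 (Finsupp.mem_support_iff.1 hi)
  haveI := Qc_finite (m + 1) d i
  rw [Qc, card_partition _ (fun κ => κ 1) (u.erase i) ?mem]
  case mem =>
    rintro κ ⟨⟨h0, hp⟩, hprof⟩
    have hne : κ 1 ≠ i := by
      have := hp 0
      rw [Fin.castSucc_zero, Fin.succ_zero_eq_one, h0] at this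
      exact fun hh => this hh.symm
    refine Finset.mem_erase.2 ⟨hne, hu ?_⟩
    rw [Finsupp.mem_support_iff, sub_single_apply_ne d i _ hne, ← hprof (κ 1)]
    haveI : Nonempty {v : Fin (m + 2) // κ v = κ 1} := ⟨⟨1, rfl⟩⟩
    exact Nat.card_pos.ne'
  refine Finset.sum_congr rfl fun j hj => ?_
  have hji : j ≠ i := (Finset.mem_erase.1 hj).1
  apply Nat.card_congr
  have hF : ∀ κ : Fin (m + 2) → ℕ, κ 1 = j →
      (κ 0 = i ∧ ∀ v : Fin (m + 1), κ v.castSucc ≠ κ v.succ) →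
      (∀ j', Nat.card {v : Fin (m + 2) // κ v = j'} = d j') →
      (((fun v : Fin (m + 1) => κ v.succ) 0 = j ∧
          ∀ v : Fin m, (fun v : Fin (m + 1) => κ v.succ) v.castSucc ≠
            (fun v : Fin (m + 1) => κ v.succ) v.succ) ∧
        ∀ j', Nat.card {v : Fin (m + 1) // (fun v : Fin (m + 1) => κ v.succ) v = j'} =
          (d - Finsupp.single i 1 : ℕ →₀ ℕ) j') := by
    intro κ h1 ⟨h0, hp⟩ hprof
    refine ⟨⟨?_, ?_⟩, ?_⟩
    · show κ (Fin.succ 0) = j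
      rw [Fin.succ_zero_eq_one]; exact h1
    · intro v
      show κ (v.castSucc).succ ≠ κ (v.succ).succ
      rw [Fin.succ_castSucc]
      exact hp v.succ
    · intro j'
      have hcs := classCard_succ κ j'
      rw [hprof j', h0] at hcs
      show Nat.card {v : Fin (m + 1) // κ v.succ = j'} =
        (d - Finsupp.single i 1 : ℕ →₀ ℕ) j'
      by_cases hj' : j' = i
      · rw [hj'] at hcs ⊢
        rw [if_pos rfl] at hcs
        rw [sub_single_apply_self]
        omega
      · rw [if_neg (fun hh => hj' hh.symm)] at hcs
        rw [sub_single_apply_ne d i j' hj']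
        omega
  have hG : ∀ κ' : Fin (m + 1) → ℕ, κ' 0 = j →
      (∀ v : Fin m, κ' v.castSucc ≠ κ' v.succ) →
      (∀ j', Nat.card {v : Fin (m + 1) // κ' v = j'} =
        (d - Finsupp.single i 1 : ℕ →₀ ℕ) j') →
      ((Fin.cases i κ' : Fin (m + 2) → ℕ) 1 = j ∧
        ((Fin.cases i κ' : Fin (m + 2) → ℕ) 0 = i ∧
          ∀ v : Fin (m + 1), (Fin.cases i κ' : Fin (m + 2) → ℕ) v.castSucc ≠
            (Fin.cases i κ' : Fin (m + 2) → ℕ) v.succ) ∧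
        ∀ j', Nat.card {v : Fin (m + 2) // (Fin.cases i κ' : Fin (m + 2) → ℕ) v = j'} = d j') := by
    intro κ' h0 hp hprof
    have hone : (1 : Fin (m + 2)) = (0 : Fin (m + 1)).succ := (Fin.succ_zero_eq_one).symm
    refine ⟨?_, ⟨rfl, ?_⟩, ?_⟩
    · rw [hone]
      show κ' 0 = j
      exact h0
    · intro v
      induction v using Fin.cases with
      | zero =>
        show (Fin.cases i κ' : Fin (m + 2) → ℕ) (Fin.castSucc 0) ≠
          (Fin.cases i κ' : Fin (m + 2) → ℕ) (Fin.succ 0)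
        rw [Fin.castSucc_zero]
        show i ≠ κ' 0
        rw [h0]
        exact fun hh => hji hh.symm
      | succ w =>
        show (Fin.cases i κ' : Fin (m + 2) → ℕ) (Fin.castSucc w.succ) ≠
          (Fin.cases i κ' : Fin (m + 2) → ℕ) (Fin.succ w.succ)
        rw [← Fin.succ_castSucc]
        show κ' w.castSucc ≠ κ' w.succ
        exact hp w
    · intro j'
      have hcs := classCard_succ (Fin.cases i κ' : Fin (m + 2) → ℕ) j'
      have hct : Nat.card {v : Fin (m + 1) //
          (Fin.cases i κ' : Fin (m + 2) → ℕ) v.succ = j'} =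
          Nat.card {v : Fin (m + 1) // κ' v = j'} := by
        apply Nat.card_congr
        exact Equiv.subtypeEquiv (Equiv.refl _) (fun v => Iff.rfl)
      rw [hct, hprof j'] at hcs
      rw [hcs]
      show (if (Fin.cases i κ' : Fin (m + 2) → ℕ) 0 = j' then 1 else 0) +
        (d - Finsupp.single i 1 : ℕ →₀ ℕ) j' = d j'
      have h00 : (Fin.cases i κ' : Fin (m + 2) → ℕ) 0 = i := rfl
      rw [h00]
      by_cases hj' : j' = i
      · subst hj'
        rw [if_pos rfl, sub_single_apply_self]
        omega
      · rw [if_neg (fun hh => hj' hh.symm), sub_single_apply_ne d i j' hj']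
        omega
  refine
    { toFun := fun κ => ⟨fun v => κ.1 v.succ, hF κ.1 κ.2.1 κ.2.2.1 κ.2.2.2⟩
      invFun := fun κ' => ⟨Fin.cases i κ'.1,
        hG κ'.1 κ'.2.1.1 κ'.2.1.2 κ'.2.2⟩
      left_inv := ?_
      right_inv := ?_ }
  · rintro ⟨κ, hκ⟩
    apply Subtype.ext
    funext v
    show (Fin.cases i (fun w => κ w.succ) : Fin (m + 2) → ℕ) v = κ v
    induction v using Fin.cases with
    | zero =>
      show i = κ 0
      exact hκ.2.1.1.symm
    | succ w => rfl
  · rintro ⟨κ', hκ'⟩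
    apply Subtype.ext
    funext v
    rfl

lemma finite_and {α : Type*} (P Q : α → Prop) [Finite {x : α // P x}] :
    Finite {x : α // Q x ∧ P x} :=
  Finite.of_injective (fun x => (⟨x.1, x.2.2⟩ : {x // P x}))
    (fun x y hxy => by
      have h2 := congrArg Subtype.val hxy
      exact Subtype.ext h2)

lemma csf_congr {V W : Type} (G : SimpleGraph V) (H : SimpleGraph W) (e : V ≃ W)
    (he : ∀ x y, G.Adj x y ↔ H.Adj (e x) (e y)) : csf G = csf H := by
  funext d
  unfold csf
  congr 1
  apply Nat.card_congr
  refine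
    { toFun := fun κ => ⟨fun w => κ.1 (e.symm w), fun x y hxy => ?_, fun i => ?_⟩
      invFun := fun κ => ⟨fun v => κ.1 (e v), fun x y hxy => ?_, fun i => ?_⟩
      left_inv := fun κ => Subtype.ext (funext fun v => by simp)
      right_inv := fun κ => Subtype.ext (funext fun v => by simp) }
  · refine κ.2.1 _ _ ?_
    rw [he]
    simpa using hxy
  · rw [← κ.2.2 i]
    exact Nat.card_congr
      (Equiv.subtypeEquiv (q := fun v => κ.1 v = i) e.symm (fun w => Iff.rfl))
  · exact κ.2.1 _ _ ((he x y).1 hxy)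
  · rw [← κ.2.2 i]
    exact Nat.card_congr
      (Equiv.subtypeEquiv (q := fun w => κ.1 w = i) e (fun v => Iff.rfl))

lemma csf_pathGraph_zero : csf (SimpleGraph.pathGraph 0) = 1 := by
  funext d
  have h1 : (1 : MvPowerSeries ℕ ℚ) d = if d = 0 then 1 else 0 := by
    have h0 : (1 : MvPowerSeries ℕ ℚ) d = MvPowerSeries.coeff d 1 := rfl
    rw [h0, MvPowerSeries.coeff_one]
  rw [csf, h1]
  split_ifs with hd
  · rw [Nat.cast_eq_one, Nat.card_eq_one_iff_unique]
    constructor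
    · exact ⟨fun κ κ' => Subtype.ext (funext fun v => v.elim0)⟩
    · refine ⟨fun v => v.elim0, fun a b hab => a.elim0, fun i => ?_⟩
      haveI : IsEmpty {v : Fin 0 // (fun v => v.elim0 : Fin 0 → ℕ) v = i} :=
        ⟨fun v => v.1.elim0⟩
      rw [Nat.card_of_isEmpty, hd]
      rfl
  · have : IsEmpty {κ : Fin 0 → ℕ //
        (∀ a b : Fin 0, (SimpleGraph.pathGraph 0).Adj a b → κ a ≠ κ b) ∧
          ∀ i : ℕ, Nat.card {v : Fin 0 // κ v = i} = d i} := by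
      refine ⟨fun κ => hd ?_⟩
      ext i
      rw [← κ.2.2 i]
      haveI : IsEmpty {v : Fin 0 // κ.1 v = i} := ⟨fun v => v.1.elim0⟩
      rw [Nat.card_of_isEmpty]
      rfl
    rw [Nat.card_of_isEmpty]
    rfl

lemma pathGraph_proper_iff {m : ℕ} (κ : Fin (m + 1) → ℕ) :
    (∀ a b : Fin (m + 1), (SimpleGraph.pathGraph (m + 1)).Adj a b → κ a ≠ κ b) ↔
      ∀ v : Fin m, κ v.castSucc ≠ κ v.succ := by
  constructor
  · intro h v
    apply h
    rw [SimpleGraph.pathGraph_adj]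
    left
    simp [Fin.coe_castSucc, Fin.val_succ]
  · intro h a b hab
    rw [SimpleGraph.pathGraph_adj] at hab
    rcases hab with hab | hab
    · have hv : (a : ℕ) < m := by omega
      have ha : a = (⟨a.val, hv⟩ : Fin m).castSucc := by
        apply Fin.ext; rfl
      have hb : b = (⟨a.val, hv⟩ : Fin m).succ := by
        apply Fin.ext; simp [Fin.val_succ]; omega
      rw [ha, hb]
      exact h _
    · have hv : (b : ℕ) < m := by omega
      have ha : b = (⟨b.val, hv⟩ : Fin m).castSucc := by
        apply Fin.ext; rfl
      have hb : a = (⟨b.val, hv⟩ : Fin m).succ := by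
        apply Fin.ext; simp [Fin.val_succ]; omega
      rw [ha, hb]
      exact (h _).symm

lemma csf_pathGraph_succ (m : ℕ) (d : ℕ →₀ ℕ) :
    csf (SimpleGraph.pathGraph (m + 1)) d = ((∑ i ∈ d.support, Qc m d i : ℕ) : ℚ) := by
  rw [csf]
  congr 1
  have h1 : Nat.card {κ : Fin (m + 1) → ℕ //
      (∀ a b : Fin (m + 1), (SimpleGraph.pathGraph (m + 1)).Adj a b → κ a ≠ κ b) ∧
        ∀ i : ℕ, Nat.card {v : Fin (m + 1) // κ v = i} = d i} =
      Nat.card {κ : Fin (m + 1) → ℕ //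
      (∀ v : Fin m, κ v.castSucc ≠ κ v.succ) ∧
        ∀ i : ℕ, Nat.card {v : Fin (m + 1) // κ v = i} = d i} := by
    apply Nat.card_congr
    exact Equiv.subtypeEquiv (Equiv.refl _)
      (fun κ => and_congr_left' (pathGraph_proper_iff κ))
  rw [h1]
  haveI : Finite {κ : Fin (m + 1) → ℕ //
      (∀ v : Fin m, κ v.castSucc ≠ κ v.succ) ∧
        ∀ i : ℕ, Nat.card {v : Fin (m + 1) // κ v = i} = d i} := colorings_finite _ d
  rw [card_partition _ (fun κ => κ 0) d.support
    (fun κ hκ => profile_mem_support κ d hκ.2 0)]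
  refine Finset.sum_congr rfl fun i _ => ?_
  rw [Qc]
  apply Nat.card_congr
  exact Equiv.subtypeEquiv (Equiv.refl _) (fun κ => by
    show (κ 0 = i ∧ _) ↔ _
    tauto)

def lolRel (a k : ℕ) : (Fin a ⊕ Fin (k + 1)) → (Fin a ⊕ Fin (k + 1)) → Prop
  | Sum.inl _, Sum.inl _ => True
  | Sum.inl _, Sum.inr p => p = 0
  | Sum.inr p, Sum.inr q => (p : ℕ) + 1 = (q : ℕ)
  | Sum.inr _, Sum.inl _ => False

def lolG (a k : ℕ) : SimpleGraph (Fin a ⊕ Fin (k + 1)) := SimpleGraph.fromRel (lolRel a k)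

lemma lol_proper_iff {a k : ℕ} (κ : Fin a ⊕ Fin (k + 1) → ℕ) :
    (∀ x y, (lolG a k).Adj x y → κ x ≠ κ y) ↔
      (Function.Injective (fun i : Fin a => κ (Sum.inl i)) ∧
       (∀ i : Fin a, κ (Sum.inl i) ≠ κ (Sum.inr 0)) ∧
       (∀ v : Fin k, κ (Sum.inr v.castSucc) ≠ κ (Sum.inr v.succ))) := by
  constructor
  · intro h
    refine ⟨fun x y hxy => ?_, fun i => ?_, fun v => ?_⟩
    · by_contra hne
      exact h (Sum.inl x) (Sum.inl y)
        ((SimpleGraph.fromRel_adj _ _ _).2 ⟨fun hc => hne (Sum.inl.inj hc), Or.inl trivial⟩) hxy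
    · exact h _ _ ((SimpleGraph.fromRel_adj _ _ _).2 ⟨by simp, Or.inl rfl⟩)
    · refine h _ _ ((SimpleGraph.fromRel_adj _ _ _).2 ⟨?_, Or.inl ?_⟩)
      · intro hc
        have := Sum.inr.inj hc
        have hv : (v.castSucc : ℕ) = (v.succ : ℕ) := congrArg Fin.val this
        simp [Fin.coe_castSucc, Fin.val_succ] at hv
      · show ((v.castSucc : ℕ) + 1 = (v.succ : ℕ))
        simp [Fin.coe_castSucc, Fin.val_succ]
  · rintro ⟨hinj, hcross, hpath⟩ x y hadj
    obtain ⟨hne, hr⟩ := (SimpleGraph.fromRel_adj (lolRel a k) x y).1 hadj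
    match x, y with
    | Sum.inl i, Sum.inl j =>
      exact fun hc => hne (congrArg Sum.inl (hinj hc))
    | Sum.inl i, Sum.inr p =>
      have hp : p = 0 := by
        rcases hr with hr | hr
        · exact hr
        · exact absurd hr (by simp [lolRel])
      subst hp
      exact hcross i
    | Sum.inr p, Sum.inl i =>
      have hp : p = 0 := by
        rcases hr with hr | hr
        · exact absurd hr (by simp [lolRel])
        · exact hr
      subst hp
      exact (hcross i).symm
    | Sum.inr p, Sum.inr q =>
      rcases hr with hr | hr
      · have hr' : (p : ℕ) + 1 = (q : ℕ) := hr
        have hpk : (p : ℕ) < k := by have := q.isLt; omega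
        have hp : p = (⟨(p : ℕ), hpk⟩ : Fin k).castSucc := by apply Fin.ext; rfl
        have hq : q = (⟨(p : ℕ), hpk⟩ : Fin k).succ := by
          apply Fin.ext; simp [Fin.val_succ]; omega
        rw [hp, hq]
        exact hpath _
      · have hr' : (q : ℕ) + 1 = (p : ℕ) := hr
        have hqk : (q : ℕ) < k := by have := p.isLt; omega
        have hp : q = (⟨(q : ℕ), hqk⟩ : Fin k).castSucc := by apply Fin.ext; rfl
        have hq : p = (⟨(q : ℕ), hqk⟩ : Fin k).succ := by
          apply Fin.ext; simp [Fin.val_succ]; omega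
        rw [hp, hq]
        exact (hpath _).symm

lemma card_sum_split {α β : Type*} [Finite α] [Finite β] (p : α ⊕ β → Prop) :
    Nat.card {x : α ⊕ β // p x} =
      Nat.card {i : α // p (Sum.inl i)} + Nat.card {b : β // p (Sum.inr b)} := by
  rw [← Nat.card_sum]
  apply Nat.card_congr
  refine
    { toFun := fun x => match x with
        | ⟨Sum.inl i, h⟩ => Sum.inl ⟨i, h⟩
        | ⟨Sum.inr b, h⟩ => Sum.inr ⟨b, h⟩
      invFun := fun x => match x with
        | Sum.inl ⟨i, h⟩ => ⟨Sum.inl i, h⟩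
        | Sum.inr ⟨b, h⟩ => ⟨Sum.inr b, h⟩
      left_inv := by rintro ⟨x | x, h⟩ <;> rfl
      right_inv := by rintro (⟨x, h⟩ | ⟨x, h⟩) <;> rfl }

lemma card_sum_split' {α β : Type*} [Finite α] [Finite β] (κ : α ⊕ β → ℕ) (j : ℕ) :
    Nat.card {x : α ⊕ β // κ x = j} =
      Nat.card {i : α // κ (Sum.inl i) = j} + Nat.card {b : β // κ (Sum.inr b) = j} :=
  card_sum_split (fun v => κ v = j)

lemma card_fiber_inj {a : ℕ} (f : Fin a → ℕ) (hinj : Function.Injective f)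
    (S : Finset ℕ) (himg : Finset.image f Finset.univ = S) (j : ℕ) :
    Nat.card {v : Fin a // f v = j} = indF S j := by
  rw [indF_apply]
  split_ifs with hj
  · rw [← himg, Finset.mem_image] at hj
    obtain ⟨v, _, hv⟩ := hj
    rw [Nat.card_eq_one_iff_unique]
    exact ⟨⟨fun x y => Subtype.ext (hinj (x.2.trans y.2.symm))⟩, ⟨⟨v, hv⟩⟩⟩
  · have : IsEmpty {v : Fin a // f v = j} := by
      refine ⟨fun v => hj ?_⟩
      rw [← himg, Finset.mem_image]
      exact ⟨v.1, Finset.mem_univ _, v.2⟩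
    exact Nat.card_of_isEmpty

lemma card_inj_image {a : ℕ} (S : Finset ℕ) (hS : S.card = a) :
    Nat.card {f : Fin a → ℕ // Function.Injective f ∧ Finset.image f Finset.univ = S} =
      a.factorial := by
  classical
  have hcard : Fintype.card {x // x ∈ S} = Fintype.card (Fin a) := by
    simp [Fintype.card_coe, hS]
  have e : {f : Fin a → ℕ // Function.Injective f ∧ Finset.image f Finset.univ = S} ≃
      (Fin a ≃ {x // x ∈ S}) := by
    refine
      { toFun := fun f => Equiv.ofBijective
          (fun i => (⟨f.1 i, by
            have := Finset.mem_image_of_mem f.1 (Finset.mem_univ i)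
            rw [f.2.2] at this
            exact this⟩ : {x // x ∈ S})) ?_
        invFun := fun e => ⟨fun i => (e i).1, fun x y h => e.injective (Subtype.ext h), ?_⟩
        left_inv := fun f => Subtype.ext (funext fun i => rfl)
        right_inv := fun e => Equiv.ext fun i => Subtype.ext rfl }
    · rw [Fintype.bijective_iff_injective_and_card]
      exact ⟨fun x y h => f.2.1 (congrArg Subtype.val h), hcard.symm⟩
    · ext j
      simp only [Finset.mem_image]
      constructor
      · rintro ⟨i, _, rfl⟩
        exact (e i).2
      · intro hj
        obtain ⟨i, hi⟩ := e.surjective ⟨j, hj⟩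
        exact ⟨i, Finset.mem_univ _, congrArg Subtype.val hi⟩
  rw [Nat.card_congr e, Nat.card_eq_fintype_card,
    Fintype.card_equiv (Fintype.equivOfCardEq hcard.symm)]
  simp

lemma sub_indF_apply (d : ℕ →₀ ℕ) (S : Finset ℕ) (j : ℕ) :
    (d - indF S : ℕ →₀ ℕ) j = d j - indF S j := Finsupp.tsub_apply d (indF S) j

lemma csf_lol (a k : ℕ) (d : ℕ →₀ ℕ) :
    csf (lolG a k) d = ((a.factorial * ∑ S ∈ d.support.powersetCard a,
        ∑ i ∈ d.support \ S, Qc k (d - indF S) i : ℕ) : ℚ) := by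
  classical
  rw [csf]
  congr 1
  -- switch to the structured properness predicate
  have h1 : Nat.card {κ : Fin a ⊕ Fin (k + 1) → ℕ //
      (∀ x y, (lolG a k).Adj x y → κ x ≠ κ y) ∧
        ∀ j, Nat.card {v // κ v = j} = d j} =
      Nat.card {κ : Fin a ⊕ Fin (k + 1) → ℕ //
      ((Function.Injective (fun i : Fin a => κ (Sum.inl i)) ∧
        (∀ i : Fin a, κ (Sum.inl i) ≠ κ (Sum.inr 0)) ∧
        (∀ v : Fin k, κ (Sum.inr v.castSucc) ≠ κ (Sum.inr v.succ)))) ∧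
        ∀ j, Nat.card {v // κ v = j} = d j} :=
    Nat.card_congr (Equiv.subtypeEquiv (Equiv.refl _)
      (fun κ => and_congr_left' (lol_proper_iff κ)))
  rw [h1]
  set PP : (Fin a ⊕ Fin (k + 1) → ℕ) → Prop := fun κ =>
    ((Function.Injective (fun i : Fin a => κ (Sum.inl i)) ∧
      (∀ i : Fin a, κ (Sum.inl i) ≠ κ (Sum.inr 0)) ∧
      (∀ v : Fin k, κ (Sum.inr v.castSucc) ≠ κ (Sum.inr v.succ)))) ∧
      ∀ j, Nat.card {v // κ v = j} = d j with hPP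
  haveI : Finite {κ : Fin a ⊕ Fin (k + 1) → ℕ // PP κ} := colorings_finite _ d
  rw [card_partition PP (fun κ => Finset.image (fun i => κ (Sum.inl i)) Finset.univ)
    (d.support.powersetCard a) ?memS]
  case memS =>
    rintro κ ⟨⟨hinj, hcross, hpath⟩, hprof⟩
    rw [Finset.mem_powersetCard]
    constructor
    · intro j hj
      rw [Finset.mem_image] at hj
      obtain ⟨i, _, rfl⟩ := hj
      exact profile_mem_support κ d hprof (Sum.inl i)
    · rw [Finset.card_image_of_injective _ hinj]
      simp
  rw [Finset.mul_sum]
  refine Finset.sum_congr rfl fun S hS => ?_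
  rw [Finset.mem_powersetCard] at hS
  obtain ⟨hSsub, hScard⟩ := hS
  haveI : Finite {κ : Fin a ⊕ Fin (k + 1) → ℕ //
      Finset.image (fun i => κ (Sum.inl i)) Finset.univ = S ∧ PP κ} := finite_and _ _
  rw [card_partition _ (fun κ => κ (Sum.inr 0)) (d.support \ S) ?memI]
  case memI =>
    rintro κ ⟨himg, ⟨hinj, hcross, hpath⟩, hprof⟩
    rw [Finset.mem_sdiff]
    refine ⟨profile_mem_support κ d hprof (Sum.inr 0), fun hin => ?_⟩
    rw [← himg, Finset.mem_image] at hin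
    obtain ⟨i, _, hi⟩ := hin
    exact hcross i hi
  rw [Finset.mul_sum]
  refine Finset.sum_congr rfl fun i hi => ?_
  rw [Finset.mem_sdiff] at hi
  obtain ⟨hisupp, hiS⟩ := hi
  -- the middle: split off the clique part
  have key : Nat.card {κ : Fin a ⊕ Fin (k + 1) → ℕ //
      κ (Sum.inr 0) = i ∧ Finset.image (fun t => κ (Sum.inl t)) Finset.univ = S ∧ PP κ} =
      Nat.card ({f : Fin a → ℕ // Function.Injective f ∧ Finset.image f Finset.univ = S} ×
        {κ' : Fin (k + 1) → ℕ //
          (κ' 0 = i ∧ ∀ v : Fin k, κ' v.castSucc ≠ κ' v.succ) ∧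
            ∀ j, Nat.card {v : Fin (k + 1) // κ' v = j} = (d - indF S : ℕ →₀ ℕ) j}) := by
    apply Nat.card_congr
    have hFwd : ∀ κ : Fin a ⊕ Fin (k + 1) → ℕ, κ (Sum.inr 0) = i →
        Finset.image (fun t => κ (Sum.inl t)) Finset.univ = S → PP κ →
        ((Function.Injective (fun t : Fin a => κ (Sum.inl t)) ∧
            Finset.image (fun t : Fin a => κ (Sum.inl t)) Finset.univ = S) ∧
          (((fun p => κ (Sum.inr p)) 0 = i ∧
            ∀ v : Fin k, (fun p => κ (Sum.inr p)) v.castSucc ≠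
              (fun p => κ (Sum.inr p)) v.succ) ∧
            ∀ j, Nat.card {v : Fin (k + 1) // (fun p => κ (Sum.inr p)) v = j} =
              (d - indF S : ℕ →₀ ℕ) j)) := by
      rintro κ h0 himg ⟨⟨hinj, hcross, hpath⟩, hprof⟩
      refine ⟨⟨hinj, himg⟩, ⟨⟨h0, hpath⟩, fun j => ?_⟩⟩
      have hsplit : Nat.card {x : Fin a ⊕ Fin (k + 1) // κ x = j} =
          Nat.card {t : Fin a // κ (Sum.inl t) = j} +
            Nat.card {p : Fin (k + 1) // κ (Sum.inr p) = j} := card_sum_split' κ j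
      have hfib : Nat.card {t : Fin a // κ (Sum.inl t) = j} = indF S j :=
        card_fiber_inj (fun t => κ (Sum.inl t)) hinj S himg j
      have hd : d j = indF S j + Nat.card {p : Fin (k + 1) // κ (Sum.inr p) = j} := by
        rw [← hprof j, hsplit, hfib]
      show Nat.card {p : Fin (k + 1) // κ (Sum.inr p) = j} = _
      rw [sub_indF_apply, hd, Nat.add_sub_cancel_left]
    have hBwd : ∀ (f : Fin a → ℕ) (g : Fin (k + 1) → ℕ),
        Function.Injective f → Finset.image f Finset.univ = S →
        (g 0 = i ∧ ∀ v : Fin k, g v.castSucc ≠ g v.succ) →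
        (∀ j, Nat.card {v : Fin (k + 1) // g v = j} = (d - indF S : ℕ →₀ ℕ) j) →
        (Sum.elim f g (Sum.inr 0) = i ∧
          Finset.image (fun t => Sum.elim f g (Sum.inl t)) Finset.univ = S ∧
          PP (Sum.elim f g)) := by
      rintro f g hinj himg ⟨hg0, hgpath⟩ hgprof
      have hnotS : ∀ t : Fin a, f t ≠ i := by
        intro t hti
        apply hiS
        rw [← himg, Finset.mem_image]
        exact ⟨t, Finset.mem_univ _, hti⟩
      refine ⟨hg0, himg, ⟨⟨hinj, ?_, hgpath⟩, fun j => ?_⟩⟩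
      · intro t
        show f t ≠ g 0
        rw [hg0]
        exact hnotS t
      · have hsplit : Nat.card {x : Fin a ⊕ Fin (k + 1) // Sum.elim f g x = j} =
            Nat.card {t : Fin a // f t = j} +
              Nat.card {p : Fin (k + 1) // g p = j} := card_sum_split' (Sum.elim f g) j
        have hfib : Nat.card {t : Fin a // f t = j} = indF S j :=
          card_fiber_inj f hinj S himg j
        have hgj := hgprof j
        have hle : indF S j ≤ d j := by
          have := indF_le hSsub
          exact this j
        rw [sub_indF_apply] at hgj
        show Nat.card {x : Fin a ⊕ Fin (k + 1) // Sum.elim f g x = j} = d j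
        rw [hsplit, hfib, hgj, Nat.add_sub_cancel' hle]
    refine
      { toFun := fun κ => (⟨fun t => κ.1 (Sum.inl t),
          (hFwd κ.1 κ.2.1 κ.2.2.1 κ.2.2.2).1⟩,
          ⟨fun p => κ.1 (Sum.inr p), (hFwd κ.1 κ.2.1 κ.2.2.1 κ.2.2.2).2⟩)
        invFun := fun fg => ⟨Sum.elim fg.1.1 fg.2.1,
          hBwd fg.1.1 fg.2.1 fg.1.2.1 fg.1.2.2 fg.2.2.1 fg.2.2.2⟩
        left_inv := fun κ => Subtype.ext (funext fun v => by cases v <;> rfl)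
        right_inv := fun fg => Prod.ext (Subtype.ext (funext fun t => rfl))
          (Subtype.ext (funext fun p => rfl)) }
  rw [key, Nat.card_prod, card_inj_image S hScard, Qc]

def lolf (a k : ℕ) : (Option (Fin a) ⊕ (Fin (k + 1) ⊕ PUnit)) → (Fin a ⊕ Fin (k + 1))
  | Sum.inl (some i) => Sum.inl i
  | Sum.inl none => Sum.inr 0
  | Sum.inr (Sum.inl p) => Sum.inr p
  | Sum.inr (Sum.inr _) => Sum.inr (Fin.last k)

def lolg (a k : ℕ) : (Fin a ⊕ Fin (k + 1)) → (Option (Fin a) ⊕ (Fin (k + 1) ⊕ PUnit))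
  | Sum.inl i => Sum.inl (some i)
  | Sum.inr p => Sum.inr (Sum.inl p)

lemma lolf_eqvGen (a k : ℕ) (x y : Option (Fin a) ⊕ (Fin (k + 1) ⊕ PUnit)) :
    Relation.EqvGen (pcRel k (ptClique (a + 1)) PtGraph.K1) x y ↔ lolf a k x = lolf a k y := by
  constructor
  · intro h
    induction h with
    | rel x y hxy =>
      rcases hxy with ⟨hx, hy⟩ | ⟨hx, hy⟩ <;> subst hx <;> subst hy <;> rfl
    | refl x => rfl
    | symm x y _ ih => exact ih.symm
    | trans x y z _ _ ih1 ih2 => exact ih1.trans ih2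
  · intro h
    have g1 : Relation.EqvGen (pcRel k (ptClique (a + 1)) PtGraph.K1)
        (Sum.inl none) (Sum.inr (Sum.inl 0)) :=
      Relation.EqvGen.rel _ _ (Or.inl ⟨rfl, rfl⟩)
    have g2 : Relation.EqvGen (pcRel k (ptClique (a + 1)) PtGraph.K1)
        (Sum.inr (Sum.inl (Fin.last k))) (Sum.inr (Sum.inr PUnit.unit)) :=
      Relation.EqvGen.rel _ _ (Or.inr ⟨rfl, rfl⟩)
    match x, y with
    | Sum.inl (some i), Sum.inl (some j) =>
      have : i = j := Sum.inl.inj h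
      subst this
      exact Relation.EqvGen.refl _
    | Sum.inl (some i), Sum.inl none => exact absurd h (by simp [lolf])
    | Sum.inl (some i), Sum.inr (Sum.inl p) => exact absurd h (by simp [lolf])
    | Sum.inl (some i), Sum.inr (Sum.inr u) => exact absurd h (by simp [lolf])
    | Sum.inl none, Sum.inl (some j) => exact absurd h (by simp [lolf])
    | Sum.inl none, Sum.inl none => exact Relation.EqvGen.refl _
    | Sum.inl none, Sum.inr (Sum.inl p) =>
      have hp : p = 0 := (Sum.inr.inj h).symm
      subst hp
      exact g1
    | Sum.inl none, Sum.inr (Sum.inr u) =>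
      have hlast : Fin.last k = 0 := (Sum.inr.inj h).symm
      cases u
      exact Relation.EqvGen.trans _ _ _ g1 (hlast ▸ g2)
    | Sum.inr (Sum.inl p), Sum.inl (some j) => exact absurd h (by simp [lolf])
    | Sum.inr (Sum.inl p), Sum.inl none =>
      have hp : p = 0 := Sum.inr.inj h
      subst hp
      exact Relation.EqvGen.symm _ _ g1
    | Sum.inr (Sum.inl p), Sum.inr (Sum.inl q) =>
      have : p = q := Sum.inr.inj h
      subst this
      exact Relation.EqvGen.refl _
    | Sum.inr (Sum.inl p), Sum.inr (Sum.inr u) =>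
      have hp : p = Fin.last k := Sum.inr.inj h
      subst hp
      cases u
      exact g2
    | Sum.inr (Sum.inr u), Sum.inl (some j) => exact absurd h (by simp [lolf])
    | Sum.inr (Sum.inr u), Sum.inl none =>
      have hlast : Fin.last k = 0 := Sum.inr.inj h
      cases u
      exact Relation.EqvGen.symm _ _
        (Relation.EqvGen.trans _ _ _ g1 (hlast ▸ g2))
    | Sum.inr (Sum.inr u), Sum.inr (Sum.inl p) =>
      have hp : p = Fin.last k := (Sum.inr.inj h).symm
      subst hp
      cases u
      exact Relation.EqvGen.symm _ _ g2
    | Sum.inr (Sum.inr u), Sum.inr (Sum.inr u') =>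
      cases u; cases u'
      exact Relation.EqvGen.refl _

lemma csf_tail_clique (a k : ℕ) :
    csf ((ptClique (a + 1)).tail k).graph = csf (lolG a k) := by
  classical
  have hfg : ∀ z, lolf a k (lolg a k z) = z := by rintro (i | p) <;> rfl
  set D := disjSum (ptClique (a + 1)).graph
      (disjSum (SimpleGraph.pathGraph (k + 1)) PtGraph.K1.graph) with hD
  have key : ∀ x y : Fin a ⊕ Fin (k + 1),
      ((x ≠ y) ∧ ∃ p q, D.Adj p q ∧ lolf a k p = x ∧ lolf a k q = y) ↔
        (lolG a k).Adj x y := by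
    intro x y
    constructor
    · rintro ⟨hne, p, q, hadj, hp, hq⟩
      subst hp; subst hq
      rcases hadj with ⟨s, t, hst, rfl, rfl⟩ | ⟨s, t, hst, rfl, rfl⟩
      · -- clique part
        have hst' : s ≠ t := hst
        match s, t with
        | some i, some j =>
          exact (SimpleGraph.fromRel_adj _ _ _).2 ⟨hne, Or.inl trivial⟩
        | some i, none =>
          exact (SimpleGraph.fromRel_adj _ _ _).2 ⟨hne, Or.inl rfl⟩
        | none, some j =>
          exact (SimpleGraph.fromRel_adj _ _ _).2 ⟨hne, Or.inr rfl⟩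
        | none, none => exact absurd rfl hst'
      · -- path / K1 part
        rcases hst with ⟨pp, qq, hpq, rfl, rfl⟩ | ⟨pp, qq, hpq, rfl, rfl⟩
        · rw [SimpleGraph.pathGraph_adj] at hpq
          rcases hpq with hpq | hpq
          · exact (SimpleGraph.fromRel_adj _ _ _).2 ⟨hne, Or.inl hpq⟩
          · exact (SimpleGraph.fromRel_adj _ _ _).2 ⟨hne, Or.inr hpq⟩
        · exact hpq.elim
    · intro hadj
      obtain ⟨hne, hr⟩ := (SimpleGraph.fromRel_adj _ _ _).1 hadj
      match x, y with
      | Sum.inl i, Sum.inl j =>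
        refine ⟨hne, Sum.inl (some i), Sum.inl (some j),
          Or.inl ⟨some i, some j, ?_, rfl, rfl⟩, rfl, rfl⟩
        show some i ≠ some j
        intro hc
        exact hne (congrArg Sum.inl (Option.some.inj hc))
      | Sum.inl i, Sum.inr p =>
        have hp : p = 0 := by
          rcases hr with hr | hr
          · exact hr
          · exact absurd hr (by simp [lolRel])
        subst hp
        refine ⟨hne, Sum.inl (some i), Sum.inl none,
          Or.inl ⟨some i, none, Option.some_ne_none i, rfl, rfl⟩, rfl, rfl⟩
      | Sum.inr p, Sum.inl j =>
        have hp : p = 0 := by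
          rcases hr with hr | hr
          · exact absurd hr (by simp [lolRel])
          · exact hr
        subst hp
        refine ⟨hne, Sum.inl none, Sum.inl (some j),
          Or.inl ⟨none, some j, Ne.symm (Option.some_ne_none j), rfl, rfl⟩, rfl, rfl⟩
      | Sum.inr p, Sum.inr q =>
        refine ⟨hne, Sum.inr (Sum.inl p), Sum.inr (Sum.inl q),
          Or.inr ⟨Sum.inl p, Sum.inl q,
            Or.inl ⟨p, q, SimpleGraph.pathGraph_adj.2 ?_, rfl, rfl⟩, rfl, rfl⟩, rfl, rfl⟩
        rcases hr with hr | hr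
        · exact Or.inl hr
        · exact Or.inr hr
  have hmk : ∀ p u : Option (Fin a) ⊕ (Fin (k + 1) ⊕ PUnit),
      ((Quotient.mk (Relation.EqvGen.setoid (pcRel k (ptClique (a + 1)) PtGraph.K1)) p) =
        Quotient.mk _ u) ↔ lolf a k p = lolf a k u := by
    intro p u
    constructor
    · intro h
      exact (lolf_eqvGen a k p u).1 (Quotient.exact h)
    · intro h
      exact Quotient.sound ((lolf_eqvGen a k p u).2 h)
  refine csf_congr _ _
    ({ toFun := Quotient.lift (lolf a k) (fun x y h => (lolf_eqvGen a k x y).1 h)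
       invFun := fun z => Quotient.mk _ (lolg a k z)
       left_inv := ?_
       right_inv := ?_ }) ?_
  · intro x
    induction x using Quotient.ind with
    | _ u =>
      apply Quotient.sound
      exact (lolf_eqvGen a k _ _).2 (hfg (lolf a k u))
  · intro z
    exact hfg z
  · intro x y
    induction x using Quotient.ind with
    | _ u =>
      induction y using Quotient.ind with
      | _ v =>
        show ((Quotient.mk (Relation.EqvGen.setoid (pcRel k (ptClique (a + 1)) PtGraph.K1)) u ≠
            Quotient.mk _ v) ∧ ∃ p q, D.Adj p q ∧
            Quotient.mk (Relation.EqvGen.setoid (pcRel k (ptClique (a + 1)) PtGraph.K1)) p =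
              Quotient.mk _ u ∧
            Quotient.mk (Relation.EqvGen.setoid (pcRel k (ptClique (a + 1)) PtGraph.K1)) q =
              Quotient.mk _ v) ↔
          (lolG a k).Adj (lolf a k u) (lolf a k v)
        constructor
        · rintro ⟨hne, p, q, hadj, hp, hq⟩
          exact (key (lolf a k u) (lolf a k v)).1
            ⟨fun hc => hne (Quotient.sound ((lolf_eqvGen a k u v).2 hc)), p, q, hadj,
              (hmk p u).1 hp, (hmk q v).1 hq⟩
        · intro hadj
          obtain ⟨hne, p, q, h1, h2, h3⟩ := (key (lolf a k u) (lolf a k v)).2 hadj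
          exact ⟨fun hc => hne ((lolf_eqvGen a k u v).1 (Quotient.exact hc)), p, q, h1,
            (hmk p u).2 h2, (hmk q v).2 h3⟩

lemma indF_support (S : Finset ℕ) : (indF S).support = S := by
  ext j
  rw [Finsupp.mem_support_iff, indF_apply]
  split_ifs with h <;> simp [h]

lemma indF_insert {S : Finset ℕ} {i : ℕ} (h : i ∉ S) :
    indF (insert i S) = Finsupp.single i 1 + indF S := by
  rw [indF, indF, Finset.sum_insert h]

lemma sub_indF_insert (d : ℕ →₀ ℕ) {S : Finset ℕ} {i : ℕ} (h : i ∉ S) :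
    (d - indF (insert i S) : ℕ →₀ ℕ) = d - indF S - Finsupp.single i 1 := by
  rw [indF_insert h, add_comm, tsub_add_eq_tsub_tsub]

def Eterm (n l : ℕ) (d : ℕ →₀ ℕ) : ℚ :=
  ∑ S ∈ d.support.powersetCard l, ∑ i ∈ d.support, (Qc (n - l - 1) (d - indF S) i : ℚ)

def Rterm (n a : ℕ) (d : ℕ →₀ ℕ) : ℚ :=
  ∑ S ∈ d.support.powersetCard a, ∑ i ∈ d.support \ S, (Qc (n - 1 - a) (d - indF S) i : ℚ)

lemma sum_powersetCard_insert (s : Finset ℕ) (b : ℕ) (F : Finset ℕ → ℕ → ℚ) :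
    ∑ T ∈ s.powersetCard b, ∑ i ∈ s \ T, F (insert i T) i =
      ∑ S ∈ s.powersetCard (b + 1), ∑ i ∈ S, F S i := by
  classical
  rw [Finset.sum_sigma', Finset.sum_sigma']
  refine Finset.sum_nbij' (fun p => ⟨insert p.2 p.1, p.2⟩) (fun p => ⟨p.1.erase p.2, p.2⟩)
    ?_ ?_ ?_ ?_ ?_
  · rintro ⟨T, i⟩ hp
    rw [Finset.mem_sigma] at hp ⊢
    obtain ⟨hT, hi⟩ := hp
    rw [Finset.mem_powersetCard] at hT
    rw [Finset.mem_sdiff] at hi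
    refine ⟨Finset.mem_powersetCard.2 ⟨?_, ?_⟩, Finset.mem_insert_self _ _⟩
    · exact Finset.insert_subset hi.1 hT.1
    · rw [Finset.card_insert_of_notMem hi.2, hT.2]
  · rintro ⟨S, i⟩ hp
    rw [Finset.mem_sigma] at hp ⊢
    obtain ⟨hS, hi⟩ := hp
    rw [Finset.mem_powersetCard] at hS
    refine ⟨Finset.mem_powersetCard.2 ⟨?_, ?_⟩, ?_⟩
    · exact (Finset.erase_subset _ _).trans hS.1
    · rw [Finset.card_erase_of_mem hi, hS.2]
      omega
    · rw [Finset.mem_sdiff]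
      exact ⟨hS.1 hi, Finset.notMem_erase _ _⟩
  · rintro ⟨T, i⟩ hp
    rw [Finset.mem_sigma] at hp
    have hiT : i ∉ T := (Finset.mem_sdiff.1 hp.2).2
    simp [Finset.erase_insert hiT]
  · rintro ⟨S, i⟩ hp
    rw [Finset.mem_sigma] at hp
    simp [Finset.insert_erase hp.2]
  · rintro ⟨T, i⟩ hp
    rfl

lemma star (n : ℕ) (d : ℕ →₀ ℕ) :
    ∀ a, a ≤ n - 1 → 1 ≤ n →
      ∑ l ∈ Finset.range (a + 1), (1 - (l : ℚ)) * Eterm n l d = Rterm n a d := by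
  classical
  intro a
  induction a with
  | zero =>
    intro _ hn
    rw [Finset.range_one, Finset.sum_singleton]
    norm_num
    rw [Eterm, Rterm, Finset.powersetCard_zero, Finset.sum_singleton, Finset.sum_singleton,
      Finset.sdiff_empty]
    simp
  | succ b ih =>
    intro hb hn
    rw [Finset.sum_range_succ, ih (by omega) hn]
    set m := n - 1 - (b + 1) with hmdef
    have hm : n - 1 - b = m + 1 := by omega
    have hEm : n - (b + 1) - 1 = m := by omega
    -- rewrite Rterm n b d
    have step1 : Rterm n b d =
        ∑ S ∈ d.support.powersetCard (b + 1), ∑ i ∈ S,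
          ∑ j ∈ d.support.erase i, (Qc m (d - indF S) j : ℚ) := by
      rw [Rterm, hm]
      rw [← sum_powersetCard_insert d.support b
        (fun S i => ∑ j ∈ d.support.erase i, (Qc m (d - indF S) j : ℚ))]
      refine Finset.sum_congr rfl fun T hT => Finset.sum_congr rfl fun i hi => ?_
      rw [Finset.mem_powersetCard] at hT
      rw [Finset.mem_sdiff] at hi
      have hiT : i ∉ T := hi.2
      have hisupp : i ∈ d.support := hi.1
      have hi' : i ∈ (d - indF T : ℕ →₀ ℕ).support := by
        rw [Finsupp.mem_support_iff, sub_indF_apply, indF_apply, if_neg hiT]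
        simpa using Finsupp.mem_support_iff.1 hisupp
      have hu : ((d - indF T : ℕ →₀ ℕ) - Finsupp.single i 1).support ⊆ d.support :=
        Finsupp.support_tsub.trans Finsupp.support_tsub
      rw [Qc_succ m (d - indF T) i hi' d.support hu]
      rw [← sub_indF_insert d hiT]
      push_cast
      rfl
    rw [step1, Rterm, Eterm, hEm, show n - 1 - (b + 1) = m from hmdef.symm]
    rw [Finset.mul_sum, ← Finset.sum_add_distrib]
    refine Finset.sum_congr rfl fun S hS => ?_
    rw [Finset.mem_powersetCard] at hS
    have hcard : S.card = b + 1 := hS.2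
    have hsum_erase : ∀ i ∈ S,
        ∑ j ∈ d.support.erase i, (Qc m (d - indF S) j : ℚ) =
          (∑ j ∈ d.support, (Qc m (d - indF S) j : ℚ)) - Qc m (d - indF S) i := by
      intro i hi
      exact Finset.sum_erase_eq_sub (hS.1 hi)
    rw [Finset.sum_congr rfl hsum_erase, Finset.sum_sub_distrib, Finset.sum_const, hcard,
      nsmul_eq_mul]
    rw [Finset.sum_sdiff_eq_sub hS.1]
    push_cast
    ring

lemma sum_indicator_indF (d : ℕ →₀ ℕ) (c : ℕ) :
    ∑ U ∈ d.support.powersetCard c, (if d = indF U then 1 else 0 : ℚ) =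
      if (∀ i, d i ≤ 1) ∧ d.support.card = c then 1 else 0 := by
  classical
  by_cases h : (∀ i, d i ≤ 1) ∧ d.support.card = c
  · rw [if_pos h]
    have hd : d = indF d.support := by
      ext j
      rw [indF_apply]
      by_cases hj : j ∈ d.support
      · rw [if_pos hj]
        have h1 := Finsupp.mem_support_iff.1 hj
        have h2 := h.1 j
        omega
      · rw [if_neg hj]
        exact Finsupp.notMem_support_iff.1 hj
    rw [Finset.sum_eq_single d.support]
    · rw [if_pos hd]
    · intro U _ hne
      rw [if_neg]
      intro hdU
      exact hne (by rw [hdU, indF_support])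
    · intro hmem
      exact absurd (Finset.mem_powersetCard.2 ⟨Finset.Subset.refl _, h.2⟩) hmem
  · rw [if_neg h]
    apply Finset.sum_eq_zero
    intro U hU
    rw [if_neg]
    intro hdU
    apply h
    constructor
    · intro i
      rw [hdU, indF_apply]
      split_ifs <;> omega
    · rw [hdU, indF_support]
      exact (Finset.mem_powersetCard.1 hU).2

lemma Rterm_top (n : ℕ) (hn : 1 ≤ n) (d : ℕ →₀ ℕ) :
    Rterm n (n - 1) d =
      (n : ℚ) * (if (∀ i, d i ≤ 1) ∧ d.support.card = n then 1 else 0) := by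
  classical
  have h0 : n - 1 - (n - 1) = 0 := by omega
  rw [Rterm, h0]
  have hstep : ∀ S ∈ d.support.powersetCard (n - 1), ∀ i ∈ d.support \ S,
      (Qc 0 (d - indF S) i : ℚ) = if d = indF (insert i S) then 1 else 0 := by
    intro S hS i hi
    rw [Qc_zero]
    rw [Finset.mem_powersetCard] at hS
    rw [Finset.mem_sdiff] at hi
    have hle : indF S ≤ d := indF_le hS.1
    have hiff : ((d - indF S : ℕ →₀ ℕ) = Finsupp.single i 1) ↔ d = indF (insert i S) := by
      rw [indF_insert hi.2]
      constructor
      · intro heq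
        ext j
        have hj := congrArg (fun f : ℕ →₀ ℕ => f j) heq
        simp only [sub_indF_apply] at hj
        rw [Finsupp.add_apply]
        have hlej := Finsupp.le_def.1 hle j
        omega
      · intro heq
        ext j
        have hj := congrArg (fun f : ℕ →₀ ℕ => f j) heq
        simp only [Finsupp.add_apply] at hj
        rw [sub_indF_apply]
        omega
    split_ifs with h1 h2 h2
    · rfl
    · exact absurd (hiff.1 h1) h2
    · exact absurd (hiff.2 h2) h1
    · rfl
  rw [Finset.sum_congr rfl (fun S hS => Finset.sum_congr rfl (fun i hi => hstep S hS i hi))]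
  rw [sum_powersetCard_insert d.support (n - 1)
    (fun U _ => (if d = indF U then 1 else 0 : ℚ))]
  rw [show n - 1 + 1 = n from by omega]
  have hconst : ∀ U ∈ d.support.powersetCard n,
      (∑ _i ∈ U, (if d = indF U then 1 else 0 : ℚ)) =
        (n : ℚ) * (if d = indF U then 1 else 0 : ℚ) := by
    intro U hU
    rw [Finset.sum_const, (Finset.mem_powersetCard.1 hU).2, nsmul_eq_mul]
  rw [Finset.sum_congr rfl hconst, ← Finset.mul_sum, sum_indicator_indF]

lemma coeff_esymm_mul_path (n l : ℕ) (hl : l + 1 ≤ n) (d : ℕ →₀ ℕ) :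
    (esymm l * csf (SimpleGraph.pathGraph (n - l))) d = Eterm n l d := by
  classical
  have hcoeff : (esymm l * csf (SimpleGraph.pathGraph (n - l))) d =
      ∑ p ∈ Finset.HasAntidiagonal.antidiagonal d,
        esymm l p.1 * csf (SimpleGraph.pathGraph (n - l)) p.2 := by
    have h1 : (esymm l * csf (SimpleGraph.pathGraph (n - l))) d =
        MvPowerSeries.coeff d (esymm l * csf (SimpleGraph.pathGraph (n - l))) := rfl
    rw [h1, MvPowerSeries.coeff_mul]
    rfl
  rw [hcoeff]
  have hfilter : ∑ p ∈ Finset.HasAntidiagonal.antidiagonal d,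
      esymm l p.1 * csf (SimpleGraph.pathGraph (n - l)) p.2 =
      ∑ p ∈ (Finset.HasAntidiagonal.antidiagonal d).filter
        (fun p : (ℕ →₀ ℕ) × (ℕ →₀ ℕ) => (∀ i, p.1 i ≤ 1) ∧ p.1.support.card = l),
        esymm l p.1 * csf (SimpleGraph.pathGraph (n - l)) p.2 := by
    symm
    apply Finset.sum_filter_of_ne
    intro p _ hne
    by_contra hc
    apply hne
    have : esymm l p.1 = 0 := by
      rw [esymm]
      exact if_neg hc
    rw [this, zero_mul]
  rw [hfilter, Eterm]
  refine Finset.sum_nbij' (fun p => p.1.support)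
    (fun S => ((indF S, d - indF S) : (ℕ →₀ ℕ) × (ℕ →₀ ℕ))) ?_ ?_ ?_ ?_ ?_ <;> beta_reduce
  · intro p hp
    rw [Finset.mem_filter] at hp
    obtain ⟨hanti, hsq, hcard⟩ := hp
    rw [Finset.HasAntidiagonal.mem_antidiagonal] at hanti
    rw [Finset.mem_powersetCard]
    refine ⟨?_, hcard⟩
    intro j hj
    rw [Finsupp.mem_support_iff] at hj ⊢
    have := congrArg (fun f : ℕ →₀ ℕ => f j) hanti
    simp only [Finsupp.add_apply] at this
    omega
  · intro S hS
    rw [Finset.mem_powersetCard] at hS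
    rw [Finset.mem_filter]
    refine ⟨?_, ?_, ?_⟩
    · rw [Finset.HasAntidiagonal.mem_antidiagonal]
      show indF S + (d - indF S) = d
      ext j
      rw [Finsupp.add_apply, sub_indF_apply]
      have := Finsupp.le_def.1 (indF_le hS.1) j
      omega
    · intro i
      rw [indF_apply]
      split_ifs <;> omega
    · rw [indF_support, hS.2]
  · intro p hp
    rw [Finset.mem_filter] at hp
    obtain ⟨hanti, hsq, hcard⟩ := hp
    rw [Finset.HasAntidiagonal.mem_antidiagonal] at hanti
    have hp1 : indF p.1.support = p.1 := by
      ext j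
      rw [indF_apply]
      by_cases hj : j ∈ p.1.support
      · rw [if_pos hj]
        have h1 := Finsupp.mem_support_iff.1 hj
        have h2 := hsq j
        omega
      · rw [if_neg hj]
        exact (Finsupp.notMem_support_iff.1 hj).symm
    have hp2 : d - indF p.1.support = p.2 := by
      rw [hp1]
      ext j
      rw [Finsupp.tsub_apply]
      have := congrArg (fun f : ℕ →₀ ℕ => f j) hanti
      simp only [Finsupp.add_apply] at this
      omega
    show ((indF p.1.support, d - indF p.1.support) : (ℕ →₀ ℕ) × (ℕ →₀ ℕ)) = p
    rw [Prod.ext_iff]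
    exact ⟨hp1, hp2⟩
  · intro S hS
    exact indF_support S
  · intro p hp
    rw [Finset.mem_filter] at hp
    obtain ⟨hanti, hsq, hcard⟩ := hp
    rw [Finset.HasAntidiagonal.mem_antidiagonal] at hanti
    have h1 : esymm l p.1 = 1 := by
      rw [esymm]
      exact if_pos ⟨hsq, hcard⟩
    rw [h1, one_mul]
    have hnl : n - l = (n - l - 1) + 1 := by omega
    rw [hnl, csf_pathGraph_succ (n - l - 1) p.2]
    have hp2 : p.2 = d - indF p.1.support := by
      have hp1 : indF p.1.support = p.1 := by
        ext j
        rw [indF_apply]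
        by_cases hj : j ∈ p.1.support
        · rw [if_pos hj]
          have ha := Finsupp.mem_support_iff.1 hj
          have hb := hsq j
          omega
        · rw [if_neg hj]
          exact (Finsupp.notMem_support_iff.1 hj).symm
      rw [hp1]
      ext j
      rw [Finsupp.tsub_apply]
      have := congrArg (fun f : ℕ →₀ ℕ => f j) hanti
      simp only [Finsupp.add_apply] at this
      omega
    rw [← hp2]
    rw [Nat.cast_sum]
    apply Finset.sum_subset
    · intro j hj
      rw [Finsupp.mem_support_iff] at hj ⊢
      have := congrArg (fun f : ℕ →₀ ℕ => f j) hanti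
      simp only [Finsupp.add_apply] at this
      omega
    · intro j _ hj
      rw [Qc_eq_zero hj, Nat.cast_zero]

/-- for `n ≥ 1` and `0 ≤ a ≤ n`,
`∑_{l=0}^{a} (1-l) e_l X_{P_{n-l}}` equals `X_{K_{a+1}^{n-1-a}} / a!` when
`a ≤ n-1`, and equals `e_n` when `a = n`. -/
theorem statement10 (n a : ℕ) (hn : 1 ≤ n) (han : a ≤ n) :
    (a ≤ n - 1 →
      ∑ l ∈ Finset.range (a + 1),
          (1 - (l : ℚ)) • (esymm l * csf (SimpleGraph.pathGraph (n - l))) =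
        (Nat.factorial a : ℚ)⁻¹ • csf ((ptClique (a + 1)).tail (n - 1 - a)).graph) ∧
    (a = n →
      ∑ l ∈ Finset.range (a + 1),
          (1 - (l : ℚ)) • (esymm l * csf (SimpleGraph.pathGraph (n - l))) =
        esymm n) := by
  constructor
  · intro hle
    apply MvPowerSeries.ext
    intro d
    rw [map_sum]
    have hL : ∀ l ∈ Finset.range (a + 1),
        (MvPowerSeries.coeff d)
            ((1 - (l : ℚ)) • (esymm l * csf (SimpleGraph.pathGraph (n - l)))) =
          (1 - (l : ℚ)) * Eterm n l d := by
      intro l hl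
      rw [Finset.mem_range] at hl
      rw [map_smul, smul_eq_mul]
      have hc : (MvPowerSeries.coeff d) (esymm l * csf (SimpleGraph.pathGraph (n - l))) =
          (esymm l * csf (SimpleGraph.pathGraph (n - l))) d := rfl
      rw [hc, coeff_esymm_mul_path n l (by omega) d]
    rw [Finset.sum_congr rfl hL, star n d a hle hn]
    have hR : (MvPowerSeries.coeff d)
        ((Nat.factorial a : ℚ)⁻¹ • csf ((ptClique (a + 1)).tail (n - 1 - a)).graph) =
        (Nat.factorial a : ℚ)⁻¹ * csf ((ptClique (a + 1)).tail (n - 1 - a)).graph d := by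
      rw [map_smul, smul_eq_mul]
      rfl
    rw [hR, csf_tail_clique a (n - 1 - a), csf_lol a (n - 1 - a) d]
    have hcast : ((a.factorial * ∑ S ∈ d.support.powersetCard a,
        ∑ i ∈ d.support \ S, Qc (n - 1 - a) (d - indF S) i : ℕ) : ℚ) =
        (a.factorial : ℚ) * Rterm n a d := by
      rw [Rterm]
      push_cast
      ring
    rw [hcast, ← mul_assoc,
      inv_mul_cancel₀ (Nat.cast_ne_zero.2 (Nat.factorial_ne_zero a)), one_mul]
  · intro ha
    subst ha
    apply MvPowerSeries.ext
    intro d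
    rw [map_sum, Finset.sum_range_succ]
    have hL : ∀ l ∈ Finset.range a,
        (MvPowerSeries.coeff d)
            ((1 - (l : ℚ)) • (esymm l * csf (SimpleGraph.pathGraph (a - l)))) =
          (1 - (l : ℚ)) * Eterm a l d := by
      intro l hl
      rw [Finset.mem_range] at hl
      rw [map_smul, smul_eq_mul]
      have hc : (MvPowerSeries.coeff d) (esymm l * csf (SimpleGraph.pathGraph (a - l))) =
          (esymm l * csf (SimpleGraph.pathGraph (a - l))) d := rfl
      rw [hc, coeff_esymm_mul_path a l (by omega) d]
    rw [Finset.sum_congr rfl hL]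
    have hstar := star a d (a - 1) (le_refl _) hn
    rw [show a - 1 + 1 = a from by omega] at hstar
    rw [hstar]
    rw [map_smul, smul_eq_mul, Nat.sub_self, csf_pathGraph_zero, mul_one]
    have hE : (MvPowerSeries.coeff d) (esymm a) =
        (if (∀ i, d i ≤ 1) ∧ d.support.card = a then 1 else 0 : ℚ) := rfl
    rw [hE, Rterm_top a hn d]
    ring

end
end
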